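/- Let G_1, ..., G_n : ℝ^p → ℝ^p be maps, G := (1/n)∑_i G_i, and let {y_k} be a sequence with y_l = y_0 for l ≤ 0. For delays τ_{i,k} with 0 ≤ τ_{i,k} ≤ τ, the inconsistent-read estimator G̃_k := (1/n)∑_{i=1}^n G_i y_{k - τ_{i,k}} satisfies ‖G̃_k - G y_k‖² ≤ (τ/n) ∑_{l=max(k-τ+1,0)}^{k} ∑_{i=1}^{n} ‖G_i y_l - G_i y_{l-1}‖². -/

import Mathlib

open Finset

lemma tele {E : Type*} [AddCommGroup E] (f : ℤ → E) (b c : ℤ) (hc : b - 1 ≤ c) :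
    ∑ l ∈ Finset.Icc b c, (f l - f (l - 1)) = f c - f (b - 1) := by
  set m : ℕ := (c + 1 - b).toNat with hm
  have key : ∑ l ∈ Finset.Icc b c, (f l - f (l - 1))
      = ∑ j ∈ Finset.range m, ((fun j : ℕ => f (b - 1 + j)) (j + 1)
          - (fun j : ℕ => f (b - 1 + j)) j) := by
    apply Finset.sum_nbij' (fun l => (l - b).toNat) (fun j : ℕ => b + j)
    · intro l hl; simp only [Finset.mem_Icc] at hl; simp only [Finset.mem_range]; omega
    · intro j hj; simp only [Finset.mem_range] at hj; simp only [Finset.mem_Icc]; omega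
    · intro l hl; simp only [Finset.mem_Icc] at hl; omega
    · intro j hj; simp only [Finset.mem_range] at hj; omega
    · intro l hl; simp only [Finset.mem_Icc] at hl
      simp only [Nat.cast_add, Nat.cast_one]
      rw [show (b - 1 + (((l - b).toNat : ℤ) + 1)) = l by omega,
        show (b - 1 + ((l - b).toNat : ℤ)) = l - 1 by omega]
  rw [key, Finset.sum_range_sub (fun j : ℕ => f (b - 1 + j))]
  simp only [Nat.cast_zero, add_zero]
  rw [show (b - 1 + (m : ℤ)) = c by omega]

theorem inconsistent_read_error_bound
    {E : Type*} [NormedAddCommGroup E] [InnerProductSpace ℝ E]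
    (n : ℕ) (hn : 1 ≤ n) (Gi : Fin n → E → E)
    (y : ℤ → E) (hy : ∀ l : ℤ, l ≤ 0 → y l = y 0)
    (τ : ℕ) (hτ : 1 ≤ τ) (k : ℕ) (τik : Fin n → ℕ) (hτik : ∀ i, τik i ≤ τ) :
    ‖(n : ℝ)⁻¹ • (∑ i : Fin n, Gi i (y ((k : ℤ) - τik i)))
        - (n : ℝ)⁻¹ • (∑ i : Fin n, Gi i (y (k : ℤ)))‖^2 ≤
      ((τ : ℝ) / n) * ∑ l ∈ Finset.Icc (max ((k : ℤ) - τ + 1) 0) (k : ℤ),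
        ∑ i : Fin n, ‖Gi i (y l) - Gi i (y (l - 1))‖^2 := by
  have hn0 : (0:ℝ) < n := by exact_mod_cast hn
  set a : ℤ := max ((k:ℤ) - τ + 1) 0 with ha
  set T : Finset ℤ := Finset.Icc a (k:ℤ) with hT
  set d : Fin n → ℤ → E := fun i l => Gi i (y l) - Gi i (y (l-1)) with hd
  set w : Fin n → ℤ → E := fun i l => if (k:ℤ) - τik i < l then d i l else 0 with hw
  set v : Fin n → E := fun i => Gi i (y ((k:ℤ) - τik i)) - Gi i (y (k:ℤ)) with hv
  have key : ∀ i, v i = -(∑ l ∈ T, w i l) := by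
    intro i
    have hti := hτik i
    set b : ℤ := max ((k:ℤ) - τik i + 1) 0 with hb
    have hfil : ∑ l ∈ T, w i l = ∑ l ∈ Finset.Icc b (k:ℤ), d i l := by
      rw [hw]
      simp only
      rw [← Finset.sum_filter]
      congr 1
      ext l
      simp only [Finset.mem_filter, hT, Finset.mem_Icc, ha, hb]
      omega
    have htel : ∑ l ∈ Finset.Icc b (k:ℤ), d i l
        = Gi i (y (k:ℤ)) - Gi i (y (b - 1)) := by
      rw [hd]
      exact tele (fun l => Gi i (y l)) b k (by omega)
    have hyb : y (b - 1) = y ((k:ℤ) - τik i) := by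
      rcases le_or_gt 0 ((k:ℤ) - τik i) with h | h
      · congr 1; omega
      · rw [hy (b-1) (by omega), hy ((k:ℤ) - τik i) (by omega)]
    rw [hfil, htel, hyb, hv]
    simp [neg_sub]
  have hcardT : ((T.card : ℕ) : ℝ) ≤ (τ : ℝ) := by
    have : T.card ≤ τ := by
      rw [hT, Int.card_Icc]; omega
    exact_mod_cast this
  have step3 : ∀ i, ‖v i‖^2 ≤ (τ:ℝ) * ∑ l ∈ T, ‖d i l‖^2 := by
    intro i
    rw [key i, norm_neg]
    calc ‖∑ l ∈ T, w i l‖^2 ≤ (∑ l ∈ T, ‖w i l‖)^2 :=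
          pow_le_pow_left₀ (norm_nonneg _) (norm_sum_le _ _) 2
      _ ≤ (T.card : ℝ) * ∑ l ∈ T, ‖w i l‖^2 := by
          exact_mod_cast sq_sum_le_card_mul_sum_sq (s := T) (f := fun l => ‖w i l‖)
      _ ≤ (τ:ℝ) * ∑ l ∈ T, ‖d i l‖^2 := by
          apply mul_le_mul hcardT _ (by positivity) (by positivity)
          apply Finset.sum_le_sum
          intro l _
          rw [hw]
          simp only
          split
          · exact le_rfl
          · norm_num
  have step2 : ‖∑ i : Fin n, v i‖^2 ≤ (n:ℝ) * ∑ i : Fin n, ‖v i‖^2 := by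
    calc ‖∑ i : Fin n, v i‖^2 ≤ (∑ i : Fin n, ‖v i‖)^2 :=
          pow_le_pow_left₀ (norm_nonneg _) (norm_sum_le _ _) 2
      _ ≤ ((Finset.univ : Finset (Fin n)).card : ℝ) * ∑ i : Fin n, ‖v i‖^2 := by
          exact_mod_cast sq_sum_le_card_mul_sum_sq (s := Finset.univ) (f := fun i => ‖v i‖)
      _ = (n:ℝ) * ∑ i : Fin n, ‖v i‖^2 := by simp
  have step1 : ‖(n : ℝ)⁻¹ • (∑ i : Fin n, Gi i (y ((k : ℤ) - τik i)))
        - (n : ℝ)⁻¹ • (∑ i : Fin n, Gi i (y (k : ℤ)))‖^2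
      = ((n:ℝ)⁻¹)^2 * ‖∑ i : Fin n, v i‖^2 := by
    rw [← smul_sub, ← Finset.sum_sub_distrib, norm_smul, mul_pow]
    congr 2
    rw [Real.norm_eq_abs, abs_of_nonneg (by positivity)]
  rw [step1]
  calc ((n:ℝ)⁻¹)^2 * ‖∑ i : Fin n, v i‖^2
      ≤ ((n:ℝ)⁻¹)^2 * ((n:ℝ) * ∑ i : Fin n, ‖v i‖^2) := by
        apply mul_le_mul_of_nonneg_left step2 (by positivity)
    _ ≤ ((n:ℝ)⁻¹)^2 * ((n:ℝ) * ∑ i : Fin n, ((τ:ℝ) * ∑ l ∈ T, ‖d i l‖^2)) := by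
        apply mul_le_mul_of_nonneg_left _ (by positivity)
        apply mul_le_mul_of_nonneg_left _ (by positivity)
        exact Finset.sum_le_sum fun i _ => step3 i
    _ = ((τ:ℝ)/n) * ∑ l ∈ T, ∑ i : Fin n, ‖Gi i (y l) - Gi i (y (l - 1))‖^2 := by
        rw [← Finset.mul_sum, Finset.sum_comm]
        simp only [hd]
        field_simp
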